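/- Consider the entire function D(z) := z·sin z + 2·cos z − 2. Then (a) D(2kπ) = 0 for every positive integer k; and (b) there exist a constant C > 0 and N ∈ ℕ such that for every integer k ≥ N, D has exactly one zero z ∈ ℂ in the open disc {z ∈ ℂ : |z − (2k−1)π| < C/k}. In particular the zeros of D near odd multiples of π satisfy λ_k = (2k−1)π + O(1/k). -/

import Mathlib

/-- The characteristic function `D(z) = z sin z + 2 cos z − 2`. -/
noncomputable def Dfun (z : ℂ) : ℂ := z * Complex.sin z + 2 * Complex.cos z - 2

open Complex in
/-- Factorization `D(z) = 2 sin(z/2) (z cos(z/2) - 2 sin(z/2))`. -/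
lemma Dfun_factor (z : ℂ) :
    Dfun z = 2 * Complex.sin (z/2) * (z * Complex.cos (z/2) - 2 * Complex.sin (z/2)) := by
  have h1 : Complex.sin z = 2 * Complex.sin (z/2) * Complex.cos (z/2) := by
    rw [← Complex.sin_two_mul]; congr 1; ring
  have h2 : Complex.cos z = 2 * Complex.cos (z/2)^2 - 1 := by
    rw [← Complex.cos_two_mul]; congr 1; ring
  have h3 := Complex.sin_sq_add_cos_sq (z/2)
  rw [Dfun, h1, h2]
  linear_combination 4 * h3

lemma cos_ne_zero_of_norm_lt {u : ℂ} (hu : ‖u‖ < Real.pi / 2) : Complex.cos u ≠ 0 := by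
  intro h
  obtain ⟨n, hn⟩ := Complex.cos_eq_zero_iff.mp h
  have hu' : u = (((2 * (n:ℝ) + 1) * Real.pi / 2 : ℝ) : ℂ) := by
    rw [hn]; push_cast; ring
  rw [hu', Complex.norm_real] at hu
  have h1 : (1:ℝ) ≤ |2 * (n:ℝ) + 1| := by
    have h0 : (2 * n + 1 : ℤ) ≠ 0 := by omega
    have h2 : (1:ℤ) ≤ |2 * n + 1| := Int.one_le_abs h0
    calc (1:ℝ) ≤ |((2 * n + 1 : ℤ) : ℝ)| := by exact_mod_cast h2
    _ = |2 * (n:ℝ) + 1| := by push_cast; ring_nf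
  have hπ : (0:ℝ) < Real.pi := Real.pi_pos
  have : |(2 * (n:ℝ) + 1) * Real.pi / 2| = |2 * (n:ℝ) + 1| * Real.pi / 2 := by
    rw [abs_div, abs_mul, abs_of_pos hπ]; norm_num
  rw [Real.norm_eq_abs, this] at hu
  nlinarith

lemma norm_cos_sub_one_le {u : ℂ} (hu : ‖u‖ ≤ 1) : ‖Complex.cos u - 1‖ ≤ ‖u‖^2 := by
  have h1 : Complex.cos u - 1 =
      ((Complex.exp (u * Complex.I) - 1 - u * Complex.I)
        + (Complex.exp (-(u * Complex.I)) - 1 - (-(u * Complex.I)))) / 2 := by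
    rw [Complex.cos]; ring_nf
  have hnorm : ‖u * Complex.I‖ = ‖u‖ := by simp
  have e1 : ‖Complex.exp (u * Complex.I) - 1 - u * Complex.I‖ ≤ ‖u‖^2 := by
    have := Complex.norm_exp_sub_one_sub_id_le (x := u * Complex.I) (by rw [hnorm]; exact hu)
    simpa [hnorm] using this
  have e2 : ‖Complex.exp (-(u * Complex.I)) - 1 - (-(u * Complex.I))‖ ≤ ‖u‖^2 := by
    have := Complex.norm_exp_sub_one_sub_id_le (x := -(u * Complex.I)) (by
      simpa [hnorm] using hu)
    simpa [hnorm] using this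
  have htri := norm_add_le (Complex.exp (u * Complex.I) - 1 - u * Complex.I)
    (Complex.exp (-(u * Complex.I)) - 1 - (-(u * Complex.I)))
  have h2n : ‖(2:ℂ)‖ = 2 := by norm_num
  rw [h1, norm_div, h2n]
  linarith

set_option maxHeartbeats 2000000 in
lemma dfun_key (k : ℕ) (hk : 10 ≤ k) :
    ∃! z : ℂ, ‖z - (((2 * (k:ℝ) - 1) * Real.pi : ℝ) : ℂ)‖ < 3 / (k:ℝ) ∧ Dfun z = 0 := by
  have hπ1 : (3.14:ℝ) ≤ Real.pi := by linarith [Real.pi_gt_d6]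
  have hπ2 : Real.pi ≤ 3.15 := by linarith [Real.pi_lt_d2]
  set K : ℝ := (k:ℝ) with hKdef
  have hK : (10:ℝ) ≤ K := by rw [hKdef]; exact_mod_cast hk
  have hK0 : (0:ℝ) < K := by linarith
  set x₀ : ℝ := (2 * K - 1) * Real.pi with hx₀def
  set x₀c : ℂ := ((x₀ : ℝ) : ℂ) with hx₀cdef
  have hx₀ge : 5.9 * K ≤ x₀ := by
    have : 1.9 * K ≤ 2 * K - 1 := by linarith
    nlinarith
  have hx₀le : x₀ ≤ 6.3 * K := by nlinarith
  -- trig values at x₀/2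
  have hc0r : Real.cos (x₀ / 2) = 0 := by
    have he : x₀ / 2 = (k:ℝ) * Real.pi - Real.pi / 2 := by rw [hx₀def]; ring
    rw [he, Real.cos_sub, Real.cos_pi_div_two, Real.sin_pi_div_two, Real.sin_nat_mul_pi]
    ring
  have hc0 : Complex.cos (x₀c / 2) = 0 := by
    have : x₀c / 2 = ((x₀ / 2 : ℝ) : ℂ) := by push_cast; ring
    rw [this, ← Complex.ofReal_cos, hc0r, Complex.ofReal_zero]
  have hs0sq : Complex.sin (x₀c / 2) ^ 2 = 1 := by
    have h := Complex.sin_sq_add_cos_sq (x₀c / 2)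
    rw [hc0] at h
    linear_combination h
  -- the auxiliary function h
  set h : ℂ → ℂ := fun w => (x₀c + w) * Complex.sin (w/2) + 2 * Complex.cos (w/2) with hdef
  -- identity
  have hid : ∀ w : ℂ, Dfun (x₀c + w) = -2 * Complex.cos (w/2) * h w := by
    intro w
    rw [Dfun_factor]
    have hz2 : (x₀c + w) / 2 = x₀c / 2 + w / 2 := by ring
    rw [hz2, Complex.sin_add, Complex.cos_add, hc0, hdef]
    simp only
    linear_combination (-2 * Complex.cos (w/2) *
      ((x₀c + w) * Complex.sin (w/2) + 2 * Complex.cos (w/2))) * hs0sq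
  -- equivalence on the small disc
  have hequiv : ∀ w : ℂ, ‖w‖ < 3 / K → (Dfun (x₀c + w) = 0 ↔ h w = 0) := by
    intro w hw
    have hw2 : ‖w / 2‖ < Real.pi / 2 := by
      rw [norm_div, Complex.norm_ofNat]
      have : ‖w‖ < 0.3 := by
        calc ‖w‖ < 3 / K := hw
        _ ≤ 0.3 := by rw [div_le_iff₀ hK0]; linarith
      nlinarith
    have hcz := cos_ne_zero_of_norm_lt hw2
    rw [hid w]
    constructor
    · intro h0
      rcases mul_eq_zero.mp h0 with h1 | h1
      · rcases mul_eq_zero.mp h1 with h2 | h2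
        · norm_num at h2
        · exact absurd h2 hcz
      · exact h1
    · intro h0; rw [h0, mul_zero]
  -- derivative of h
  have hderiv : ∀ w : ℂ, HasDerivAt h ((x₀c + w) * Complex.cos (w/2) / 2) w := by
    intro w
    have h1 : HasDerivAt (fun w : ℂ => w / 2) (1/2 : ℂ) w := by
      simpa using (hasDerivAt_id w).div_const 2
    have hsin : HasDerivAt (fun w : ℂ => Complex.sin (w/2)) (Complex.cos (w/2) * (1/2)) w :=
      by have := (Complex.hasDerivAt_sin (w/2)).comp w h1; exact this
    have hcos : HasDerivAt (fun w : ℂ => Complex.cos (w/2)) (-Complex.sin (w/2) * (1/2)) w :=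
      by have := (Complex.hasDerivAt_cos (w/2)).comp w h1; exact this
    have hlin : HasDerivAt (fun w : ℂ => x₀c + w) 1 w := (hasDerivAt_id w).const_add x₀c
    have : HasDerivAt h (1 * Complex.sin (w / 2) + (x₀c + w) * (Complex.cos (w / 2) * (1 / 2))
        + 2 * (-Complex.sin (w / 2) * (1 / 2))) w := (hlin.mul hsin).add (hcos.const_mul (2:ℂ))
    convert this using 1
    ring
  -- derivative bound for g = h - (x₀/2) w
  have hx₀norm : ‖x₀c‖ = x₀ := by
    rw [hx₀cdef, Complex.norm_real, Real.norm_eq_abs, abs_of_pos]; nlinarith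
  have hbound : ∀ w : ℂ, ‖w‖ < 3 / K →
      ‖(x₀c + w) * Complex.cos (w/2) / 2 - x₀c / 2 * 1‖ ≤ 9 / K := by
    intro w hw
    have h2n : ‖(2:ℂ)‖ = 2 := by norm_num
    have hw03 : ‖w‖ ≤ 0.3 := by
      calc ‖w‖ ≤ 3 / K := le_of_lt hw
      _ ≤ 0.3 := by rw [div_le_iff₀ hK0]; linarith
    have hwn2 : ‖w/2‖ = ‖w‖/2 := by rw [norm_div, h2n]
    have hw2 : ‖w/2‖ ≤ 1 := by rw [hwn2]; linarith
    have hcm1 : ‖Complex.cos (w/2) - 1‖ ≤ ‖w/2‖^2 := norm_cos_sub_one_le hw2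
    have hw2K : ‖w/2‖ ≤ 1.5 / K := by
      rw [hwn2]
      calc ‖w‖ / 2 ≤ (3/K) / 2 := by linarith
      _ = 1.5 / K := by ring
    have hcm1K : ‖Complex.cos (w/2) - 1‖ ≤ 2.25 / K^2 := by
      have h2 : (0:ℝ) ≤ ‖w/2‖ := norm_nonneg _
      have : ‖w/2‖^2 ≤ (1.5/K)^2 := by nlinarith
      have he : (1.5/K)^2 = 2.25/K^2 := by ring
      linarith [he ▸ this]
    have hcw : ‖Complex.cos (w/2)‖ ≤ 1.1 := by
      have h15 : ‖w/2‖ ≤ 0.15 := by rw [hwn2]; linarith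
      calc ‖Complex.cos (w/2)‖ = ‖(Complex.cos (w/2) - 1) + 1‖ := by congr 1; ring
      _ ≤ ‖Complex.cos (w/2) - 1‖ + ‖(1:ℂ)‖ := norm_add_le _ _
      _ ≤ ‖w/2‖^2 + 1 := by rw [norm_one]; linarith
      _ ≤ 1.1 := by nlinarith [norm_nonneg (w/2)]
    have hsplit : (x₀c + w) * Complex.cos (w/2) / 2 - x₀c / 2 * 1
        = x₀c * (Complex.cos (w/2) - 1) / 2 + w * Complex.cos (w/2) / 2 := by ring
    have t1 : ‖x₀c * (Complex.cos (w/2) - 1) / 2‖ ≤ 7.1 / K := by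
      rw [norm_div, norm_mul, hx₀norm, h2n]
      have hstep : x₀ * ‖Complex.cos (w/2) - 1‖ ≤ 6.3 * K * (2.25 / K^2) := by
        apply mul_le_mul hx₀le hcm1K (norm_nonneg _) (by nlinarith)
      have heq : 6.3 * K * (2.25 / K^2) / 2 = 7.0875 / K := by
        field_simp; ring
      have : x₀ * ‖Complex.cos (w/2) - 1‖ / 2 ≤ 7.0875 / K := by
        rw [← heq]; linarith
      have : (7.0875:ℝ) / K ≤ 7.1 / K := by gcongr <;> norm_num
      linarith
    have t2 : ‖w * Complex.cos (w/2) / 2‖ ≤ 1.7 / K := by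
      rw [norm_div, norm_mul, h2n]
      have hstep : ‖w‖ * ‖Complex.cos (w/2)‖ ≤ (3/K) * 1.1 := by
        apply mul_le_mul (le_of_lt hw) hcw (norm_nonneg _) (by positivity)
      have heq : (3:ℝ)/K * 1.1 / 2 = 1.65 / K := by field_simp; ring
      have h1 : ‖w‖ * ‖Complex.cos (w/2)‖ / 2 ≤ 1.65 / K := by rw [← heq]; linarith
      have h2 : (1.65:ℝ) / K ≤ 1.7 / K := by gcongr <;> norm_num
      linarith
    calc ‖(x₀c + w) * Complex.cos (w/2) / 2 - x₀c / 2 * 1‖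
        = ‖x₀c * (Complex.cos (w/2) - 1) / 2 + w * Complex.cos (w/2) / 2‖ := by rw [hsplit]
      _ ≤ ‖x₀c * (Complex.cos (w/2) - 1) / 2‖ + ‖w * Complex.cos (w/2) / 2‖ := norm_add_le _ _
      _ ≤ 7.1 / K + 1.7 / K := by linarith
      _ ≤ 9 / K := by
          rw [← add_div]
          gcongr <;> norm_num
  -- injectivity of h on the ball
  have hinj : ∀ w₁ ∈ Metric.ball (0:ℂ) (3/K), ∀ w₂ ∈ Metric.ball (0:ℂ) (3/K),
      h w₁ = 0 → h w₂ = 0 → w₁ = w₂ := by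
    intro w₁ hw₁ w₂ hw₂ hz₁ hz₂
    set g : ℂ → ℂ := fun w => h w - x₀c / 2 * w with hgdef
    have hg : ∀ w ∈ Metric.ball (0:ℂ) (3/K),
        HasDerivWithinAt g ((x₀c + w) * Complex.cos (w/2) / 2 - x₀c / 2 * 1)
          (Metric.ball (0:ℂ) (3/K)) w := by
      intro w _
      exact ((hderiv w).sub ((hasDerivAt_id w).const_mul (x₀c/2))).hasDerivWithinAt
    have hb : ∀ w ∈ Metric.ball (0:ℂ) (3/K),
        ‖(x₀c + w) * Complex.cos (w/2) / 2 - x₀c / 2 * 1‖ ≤ 9 / K := by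
      intro w hw
      exact hbound w (by simpa [Metric.mem_ball, dist_zero_right] using hw)
    have key := (convex_ball (0:ℂ) (3/K)).norm_image_sub_le_of_norm_hasDerivWithin_le
      hg hb hw₂ hw₁
    have hgval : g w₁ - g w₂ = -(x₀c / 2 * (w₁ - w₂)) := by
      rw [hgdef]; simp only; rw [hz₁, hz₂]; ring
    rw [hgval] at key
    have hlhs : ‖-(x₀c / 2 * (w₁ - w₂))‖ = x₀ / 2 * ‖w₁ - w₂‖ := by
      rw [norm_neg, norm_mul, norm_div, hx₀norm, Complex.norm_ofNat]
    rw [hlhs] at key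
    have hd : (0:ℝ) ≤ ‖w₁ - w₂‖ := norm_nonneg _
    have hgap : 9 / K < x₀ / 2 := by
      rw [div_lt_iff₀ hK0]
      nlinarith
    have : ‖w₁ - w₂‖ = 0 := by nlinarith
    exact sub_eq_zero.mp (norm_eq_zero.mp this)
  -- real version of h and existence via IVT
  set f : ℝ → ℝ := fun t => (x₀ + t) * Real.sin (t/2) + 2 * Real.cos (t/2) with hfdef
  have hcast : ∀ t : ℝ, h ((t:ℝ):ℂ) = ((f t : ℝ) : ℂ) := by
    intro t
    rw [hdef, hfdef]
    simp only
    rw [show ((t:ℂ))/2 = ((t/2 : ℝ) : ℂ) by push_cast; ring,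
      ← Complex.ofReal_sin, ← Complex.ofReal_cos]
    push_cast
    ring
  have hf0 : f 0 = 2 := by simp [hfdef]
  have hfneg : f (-(3/K)) < 0 := by
    have hu0 : (0:ℝ) < 3/(2*K) := by positivity
    have hu1 : 3/(2*K) ≤ 1 := by rw [div_le_one (by positivity)]; linarith
    have hst : 3/(2*K) - (3/(2*K))^3/4 < Real.sin (3/(2*K)) := by
      have := Real.sin_gt_sub_cube hu0; have : (0:ℝ) ≤ (3/(2*K))^3 := (by positivity); linarith
    have hstlb : 1.4 / K ≤ Real.sin (3/(2*K)) := by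
      have hKsq : (100:ℝ) ≤ K^2 := by nlinarith
      have hcube : (3/(2*K))^3 / 4 ≤ 0.1 / K := by
        have he : (3/(2*K))^3 / 4 = 27 / (32 * K^3) := by field_simp; ring
        rw [he, div_le_div_iff₀ (by positivity) hK0]
        nlinarith
      have h14 : (1.4:ℝ) / K = 3/(2*K) - 0.1/K := by field_simp; ring
      linarith
    have hexp : f (-(3/K)) = -((x₀ - 3/K) * Real.sin (3/(2*K))) + 2 * Real.cos (3/(2*K)) := by
      rw [hfdef]
      simp only
      rw [show (-(3/K))/2 = -(3/(2*K)) by ring, Real.sin_neg, Real.cos_neg]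
      ring
    have hprod : 8 ≤ (x₀ - 3/K) * Real.sin (3/(2*K)) := by
      have h3K : 3/K ≤ 0.3 := by rw [div_le_iff₀ hK0]; linarith
      have hx : 5.8 * K ≤ x₀ - 3/K := by linarith
      have hxnn : (0:ℝ) ≤ 5.8 * K := by linarith
      have hmul := mul_le_mul hx hstlb (by positivity) (by linarith)
      have h14 : 5.8 * K * (1.4 / K) = 8.12 := by field_simp; ring
      rw [h14] at hmul
      linarith
    have hcos1 := Real.cos_le_one (3/(2*K))
    rw [hexp]
    nlinarith
  have hivt : ∃ t ∈ Set.Ioo (-(3/K)) 0, f t = 0 := by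
    have hab : -(3/K) ≤ (0:ℝ) := by
      have : (0:ℝ) ≤ 3/K := by positivity
      linarith
    have hcont : ContinuousOn f (Set.Icc (-(3/K)) 0) := by
      apply Continuous.continuousOn
      fun_prop
    have hmem : (0:ℝ) ∈ Set.Ioo (f (-(3/K))) (f 0) := by
      constructor
      · exact hfneg
      · rw [hf0]; norm_num
    have := intermediate_value_Ioo hab hcont hmem
    obtain ⟨t, ht, hft⟩ := this
    exact ⟨t, ht, hft⟩
  obtain ⟨t, ht, hft⟩ := hivt
  have htnorm : ‖((t:ℝ):ℂ)‖ < 3 / K := by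
    rw [Complex.norm_real, Real.norm_eq_abs, abs_lt]
    exact ⟨ht.1, lt_of_lt_of_le ht.2 (by positivity)⟩
  have hht : h ((t:ℝ):ℂ) = 0 := by rw [hcast, hft, Complex.ofReal_zero]
  refine ⟨x₀c + ((t:ℝ):ℂ), ⟨?_, ?_⟩, ?_⟩
  · simpa using htnorm
  · exact (hequiv _ htnorm).mpr hht
  · rintro z' ⟨hz1', hz2'⟩
    have hw' : ‖z' - x₀c‖ < 3 / K := hz1'
    have hh' : h (z' - x₀c) = 0 := by
      have := (hequiv (z' - x₀c) hw').mp
      rw [show x₀c + (z' - x₀c) = z' by ring] at this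
      exact this hz2'
    have := hinj (z' - x₀c) (by simpa [Metric.mem_ball, dist_zero_right] using hw')
      ((t:ℝ):ℂ) (by simpa [Metric.mem_ball, dist_zero_right] using htnorm) hh' hht
    rw [show z' = x₀c + (z' - x₀c) by ring, this]

/-- (a) `D(2kπ) = 0` for every positive integer `k`; (b) there are `C > 0` and `N` such that
for every `k ≥ N`, `D` has exactly one zero in the open disc of radius `C/k` around
`(2k−1)π`. -/
theorem stmt16 :
    (∀ k : ℕ, 0 < k → Dfun ((2 * (k:ℝ) * Real.pi : ℝ) : ℂ) = 0) ∧
    (∃ C : ℝ, 0 < C ∧ ∃ N : ℕ, ∀ k : ℕ, N ≤ k →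
      ∃! z : ℂ, ‖z - (((2 * (k:ℝ) - 1) * Real.pi : ℝ) : ℂ)‖ < C / (k:ℝ) ∧ Dfun z = 0) := by
  constructor
  · intro k _
    have hs : Real.sin (2 * (k:ℝ) * Real.pi) = 0 := by
      have : 2 * (k:ℝ) * Real.pi = ((2*k : ℕ):ℝ) * Real.pi := by push_cast; ring
      rw [this, Real.sin_nat_mul_pi]
    have hc : Real.cos (2 * (k:ℝ) * Real.pi) = 1 := by
      have : 2 * (k:ℝ) * Real.pi = ((k : ℕ):ℝ) * (2 * Real.pi) := by push_cast; ring
      rw [this, Real.cos_nat_mul_two_pi]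
    rw [Dfun, ← Complex.ofReal_sin, ← Complex.ofReal_cos, hs, hc]
    simp
  · exact ⟨3, by norm_num, 10, fun k hk => dfun_key k hk⟩
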